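/- The lattice L_{H8} = {x ∈ Z^8 : x mod 2 ∈ H8} obtained as the preimage of the [8,4,4] Hamming code H8 under reduction modulo 2 is isometric to √2·E8, i.e., L_{H8} equipped with the standard form is an even lattice isometric to the E8 lattice with its bilinear form doubled. -/
import Mathlib

noncomputable section

/-- The [8,4,4] Hamming code `H8`. -/
def H8 : Submodule (ZMod 2) (Fin 8 → ZMod 2) :=
  Submodule.span (ZMod 2)
    {![1,1,1,1,1,1,1,1], ![1,1,1,1,0,0,0,0], ![1,1,0,0,1,1,0,0], ![1,0,1,0,1,0,1,0]}

/-- The lattice `L_{H8} ⊆ ℤ⁸`: the preimage of `H8` under reduction mod 2. -/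
def LH8 : Set (Fin 8 → ℤ) :=
  {x | (fun i => (x i : ZMod 2)) ∈ H8}

/-- The E8 root lattice, realized in `ℚ⁸`. -/
def E8Set : Set (Fin 8 → ℚ) :=
  {x | ((∀ i, ∃ n : ℤ, x i = n) ∨ (∀ i, ∃ n : ℤ, x i = n + 1/2)) ∧
    ∃ m : ℤ, ∑ i, x i = 2 * m}

def gens : Fin 4 → (Fin 8 → ZMod 2) :=
  ![![1,1,1,1,1,1,1,1], ![1,1,1,1,0,0,0,0], ![1,1,0,0,1,1,0,0], ![1,0,1,0,1,0,1,0]]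

set_option maxRecDepth 100000 in
lemma H8_mem_aux : ∀ c : Fin 8 → ZMod 2,
    (∃ t : Fin 4 → ZMod 2, ∑ i, t i • gens i = c) ↔
      (c 0 + c 1 + c 2 + c 3 = 0 ∧ c 2 + c 3 + c 4 + c 5 = 0 ∧
       c 4 + c 5 + c 6 + c 7 = 0 ∧ c 0 + c 2 + c 4 + c 6 = 0) := by decide

lemma mem_H8_iff (c : Fin 8 → ZMod 2) :
    c ∈ H8 ↔ (c 0 + c 1 + c 2 + c 3 = 0 ∧ c 2 + c 3 + c 4 + c 5 = 0 ∧
       c 4 + c 5 + c 6 + c 7 = 0 ∧ c 0 + c 2 + c 4 + c 6 = 0) := by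
  have hr : ({![1,1,1,1,1,1,1,1], ![1,1,1,1,0,0,0,0], ![1,1,0,0,1,1,0,0], ![1,0,1,0,1,0,1,0]}
      : Set (Fin 8 → ZMod 2)) = Set.range gens := by
    simp [gens, Matrix.range_cons, Matrix.range_empty]; ext y
    constructor <;> rintro (rfl|rfl|rfl|rfl) <;> simp
  rw [H8, hr, Submodule.mem_span_range_iff_exists_fun]
  exact H8_mem_aux c

lemma mem_LH8_iff (x : Fin 8 → ℤ) :
    x ∈ LH8 ↔ (2 ∣ x 0 + x 1 + x 2 + x 3) ∧ (2 ∣ x 2 + x 3 + x 4 + x 5) ∧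
      (2 ∣ x 4 + x 5 + x 6 + x 7) ∧ (2 ∣ x 0 + x 2 + x 4 + x 6) := by
  have key : ∀ a b c d : ℤ, ((a : ZMod 2) + b + c + d = 0 ↔ 2 ∣ a + b + c + d) := by
    intro a b c d
    rw [show ((a : ZMod 2) + b + c + d) = ((a + b + c + d : ℤ) : ZMod 2) by push_cast; ring]
    exact ZMod.intCast_zmod_eq_zero_iff_dvd _ 2
  simp only [LH8, Set.mem_setOf_eq, mem_H8_iff, key]

def fH8 (x : Fin 8 → ℤ) : Fin 8 → ℚ :=
  ![((x 0 : ℚ) + x 1)/2, ((x 0 : ℚ) - x 1)/2, ((x 2 : ℚ) + x 3)/2, ((x 2 : ℚ) - x 3)/2,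
    ((x 4 : ℚ) + x 5)/2, ((x 4 : ℚ) - x 5)/2, ((x 6 : ℚ) + x 7)/2, ((x 6 : ℚ) - x 7)/2]

lemma fH8_0 (x : Fin 8 → ℤ) : fH8 x 0 = ((x 0 : ℚ) + x 1)/2 := rfl
lemma fH8_1 (x : Fin 8 → ℤ) : fH8 x 1 = ((x 0 : ℚ) - x 1)/2 := rfl
lemma fH8_2 (x : Fin 8 → ℤ) : fH8 x 2 = ((x 2 : ℚ) + x 3)/2 := rfl
lemma fH8_3 (x : Fin 8 → ℤ) : fH8 x 3 = ((x 2 : ℚ) - x 3)/2 := rfl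
lemma fH8_4 (x : Fin 8 → ℤ) : fH8 x 4 = ((x 4 : ℚ) + x 5)/2 := rfl
lemma fH8_5 (x : Fin 8 → ℤ) : fH8 x 5 = ((x 4 : ℚ) - x 5)/2 := rfl
lemma fH8_6 (x : Fin 8 → ℤ) : fH8 x 6 = ((x 6 : ℚ) + x 7)/2 := rfl
lemma fH8_7 (x : Fin 8 → ℤ) : fH8 x 7 = ((x 6 : ℚ) - x 7)/2 := rfl

lemma fH8_sum (x : Fin 8 → ℤ) :
    ∑ i, fH8 x i = (x 0 : ℚ) + x 2 + x 4 + x 6 := by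
  simp only [Fin.sum_univ_eight, fH8_0, fH8_1, fH8_2, fH8_3, fH8_4, fH8_5, fH8_6, fH8_7]
  ring


def mk8 (a0 a1 a2 a3 a4 a5 a6 a7 : ℤ) : Fin 8 → ℤ := ![a0,a1,a2,a3,a4,a5,a6,a7]
lemma mk8_0 (a0 a1 a2 a3 a4 a5 a6 a7 : ℤ) : mk8 a0 a1 a2 a3 a4 a5 a6 a7 0 = a0 := rfl
lemma mk8_1 (a0 a1 a2 a3 a4 a5 a6 a7 : ℤ) : mk8 a0 a1 a2 a3 a4 a5 a6 a7 1 = a1 := rfl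
lemma mk8_2 (a0 a1 a2 a3 a4 a5 a6 a7 : ℤ) : mk8 a0 a1 a2 a3 a4 a5 a6 a7 2 = a2 := rfl
lemma mk8_3 (a0 a1 a2 a3 a4 a5 a6 a7 : ℤ) : mk8 a0 a1 a2 a3 a4 a5 a6 a7 3 = a3 := rfl
lemma mk8_4 (a0 a1 a2 a3 a4 a5 a6 a7 : ℤ) : mk8 a0 a1 a2 a3 a4 a5 a6 a7 4 = a4 := rfl
lemma mk8_5 (a0 a1 a2 a3 a4 a5 a6 a7 : ℤ) : mk8 a0 a1 a2 a3 a4 a5 a6 a7 5 = a5 := rfl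
lemma mk8_6 (a0 a1 a2 a3 a4 a5 a6 a7 : ℤ) : mk8 a0 a1 a2 a3 a4 a5 a6 a7 6 = a6 := rfl
lemma mk8_7 (a0 a1 a2 a3 a4 a5 a6 a7 : ℤ) : mk8 a0 a1 a2 a3 a4 a5 a6 a7 7 = a7 := rfl

/-- `L_{H8}` is an even lattice isometric to `√2·E8`: there is an additive bijection
of `L_{H8}` onto the E8 lattice halving the bilinear form. -/
theorem LH8_is_sqrt2_E8 :
    (∀ x ∈ LH8, (2 : ℤ) ∣ ∑ i, x i * x i) ∧
    ∃ f : (Fin 8 → ℤ) → (Fin 8 → ℚ),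
      Set.BijOn f LH8 E8Set ∧
      (∀ x ∈ LH8, ∀ y ∈ LH8, f (x + y) = f x + f y) ∧
      (∀ x ∈ LH8, ∀ y ∈ LH8,
        ∑ i, f x i * f y i = ((∑ i, x i * y i : ℤ) : ℚ) / 2) := by
  have hsq : ∀ a : ℤ, ∃ k, a * a - a = 2 * k := by
    intro a
    rcases Int.even_mul_succ_self (a - 1) with ⟨k, hk⟩
    exact ⟨k, by nlinarith⟩
  constructor
  · intro x hx
    rw [mem_LH8_iff] at hx
    obtain ⟨h1, h2, h3, h4⟩ := hx
    obtain ⟨k0, e0⟩ := hsq (x 0); obtain ⟨k1, e1⟩ := hsq (x 1)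
    obtain ⟨k2, e2⟩ := hsq (x 2); obtain ⟨k3, e3⟩ := hsq (x 3)
    obtain ⟨k4, e4⟩ := hsq (x 4); obtain ⟨k5, e5⟩ := hsq (x 5)
    obtain ⟨k6, e6⟩ := hsq (x 6); obtain ⟨k7, e7⟩ := hsq (x 7)
    obtain ⟨K, hK⟩ : 2 ∣ x 0 + x 1 + x 2 + x 3 + x 4 + x 5 + x 6 + x 7 := by omega
    refine ⟨k0 + k1 + k2 + k3 + k4 + k5 + k6 + k7 + K, ?_⟩
    rw [Fin.sum_univ_eight]; linarith
  · refine ⟨fH8, ⟨?_, ?_, ?_⟩, ?_, ?_⟩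
    · -- MapsTo
      intro x hx
      rw [mem_LH8_iff] at hx
      obtain ⟨h1, h2, h3, h4⟩ := hx
      obtain ⟨m, hm⟩ := h4
      constructor
      · rcases Int.even_or_odd (x 0 + x 1) with ⟨a, ha⟩ | ⟨a, ha⟩
        · left
          obtain ⟨k0, e0⟩ : ∃ k, x 0 + x 1 = 2 * k := ⟨a, by omega⟩
          obtain ⟨k1, e1⟩ : ∃ k, x 2 + x 3 = 2 * k := ⟨(x 2 + x 3) / 2, by omega⟩
          obtain ⟨k2, e2⟩ : ∃ k, x 4 + x 5 = 2 * k := ⟨(x 4 + x 5) / 2, by omega⟩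
          obtain ⟨k3, e3⟩ : ∃ k, x 6 + x 7 = 2 * k := ⟨(x 6 + x 7) / 2, by omega⟩
          have c0 : (x 0 : ℚ) + x 1 = 2 * k0 := by exact_mod_cast e0
          have c1 : (x 2 : ℚ) + x 3 = 2 * k1 := by exact_mod_cast e1
          have c2 : (x 4 : ℚ) + x 5 = 2 * k2 := by exact_mod_cast e2
          have c3 : (x 6 : ℚ) + x 7 = 2 * k3 := by exact_mod_cast e3
          intro i; fin_cases i
          · exact ⟨k0, by simp [fH8_0]; linarith⟩
          · exact ⟨x 0 - k0, by simp [fH8_1]; push_cast; linarith⟩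
          · exact ⟨k1, by simp [fH8_2]; linarith⟩
          · exact ⟨x 2 - k1, by simp [fH8_3]; push_cast; linarith⟩
          · exact ⟨k2, by simp [fH8_4]; linarith⟩
          · exact ⟨x 4 - k2, by simp [fH8_5]; push_cast; linarith⟩
          · exact ⟨k3, by simp [fH8_6]; linarith⟩
          · exact ⟨x 6 - k3, by simp [fH8_7]; push_cast; linarith⟩
        · right
          obtain ⟨k0, e0⟩ : ∃ k, x 0 + x 1 = 2 * k + 1 := ⟨a, by omega⟩
          obtain ⟨k1, e1⟩ : ∃ k, x 2 + x 3 = 2 * k + 1 := ⟨(x 2 + x 3 - 1) / 2, by omega⟩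
          obtain ⟨k2, e2⟩ : ∃ k, x 4 + x 5 = 2 * k + 1 := ⟨(x 4 + x 5 - 1) / 2, by omega⟩
          obtain ⟨k3, e3⟩ : ∃ k, x 6 + x 7 = 2 * k + 1 := ⟨(x 6 + x 7 - 1) / 2, by omega⟩
          have c0 : (x 0 : ℚ) + x 1 = 2 * k0 + 1 := by exact_mod_cast e0
          have c1 : (x 2 : ℚ) + x 3 = 2 * k1 + 1 := by exact_mod_cast e1
          have c2 : (x 4 : ℚ) + x 5 = 2 * k2 + 1 := by exact_mod_cast e2
          have c3 : (x 6 : ℚ) + x 7 = 2 * k3 + 1 := by exact_mod_cast e3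
          intro i; fin_cases i
          · exact ⟨k0, by simp [fH8_0]; linarith⟩
          · exact ⟨x 0 - k0 - 1, by simp [fH8_1]; push_cast; linarith⟩
          · exact ⟨k1, by simp [fH8_2]; linarith⟩
          · exact ⟨x 2 - k1 - 1, by simp [fH8_3]; push_cast; linarith⟩
          · exact ⟨k2, by simp [fH8_4]; linarith⟩
          · exact ⟨x 4 - k2 - 1, by simp [fH8_5]; push_cast; linarith⟩
          · exact ⟨k3, by simp [fH8_6]; linarith⟩
          · exact ⟨x 6 - k3 - 1, by simp [fH8_7]; push_cast; linarith⟩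
      · refine ⟨m, ?_⟩
        rw [fH8_sum]
        exact_mod_cast hm
    · -- InjOn
      intro x _ y _ h
      have h0 := congrFun h 0; have h1 := congrFun h 1
      have h2 := congrFun h 2; have h3 := congrFun h 3
      have h4 := congrFun h 4; have h5 := congrFun h 5
      have h6 := congrFun h 6; have h7 := congrFun h 7
      rw [fH8_0, fH8_0] at h0; rw [fH8_1, fH8_1] at h1
      rw [fH8_2, fH8_2] at h2; rw [fH8_3, fH8_3] at h3
      rw [fH8_4, fH8_4] at h4; rw [fH8_5, fH8_5] at h5
      rw [fH8_6, fH8_6] at h6; rw [fH8_7, fH8_7] at h7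
      have q0 : (x 0 : ℚ) = y 0 := by linarith
      have q1 : (x 1 : ℚ) = y 1 := by linarith
      have q2 : (x 2 : ℚ) = y 2 := by linarith
      have q3 : (x 3 : ℚ) = y 3 := by linarith
      have q4 : (x 4 : ℚ) = y 4 := by linarith
      have q5 : (x 5 : ℚ) = y 5 := by linarith
      have q6 : (x 6 : ℚ) = y 6 := by linarith
      have q7 : (x 7 : ℚ) = y 7 := by linarith
      funext i; fin_cases i
      exacts [by exact_mod_cast q0, by exact_mod_cast q1, by exact_mod_cast q2,
        by exact_mod_cast q3, by exact_mod_cast q4, by exact_mod_cast q5,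
        by exact_mod_cast q6, by exact_mod_cast q7]
    · -- SurjOn
      rintro y ⟨hint | hhalf, m, hm⟩
      · choose n hn using hint
        refine ⟨mk8 (n 0 + n 1) (n 0 - n 1) (n 2 + n 3) (n 2 - n 3)
            (n 4 + n 5) (n 4 - n 5) (n 6 + n 7) (n 6 - n 7), ?_, ?_⟩
        · rw [mem_LH8_iff]
          have hs : n 0 + n 1 + n 2 + n 3 + n 4 + n 5 + n 6 + n 7 = 2 * m := by
            rw [Fin.sum_univ_eight] at hm
            simp only [hn] at hm
            exact_mod_cast hm
          refine ⟨?_, ?_, ?_, ?_⟩ <;>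
            simp only [mk8_0, mk8_1, mk8_2, mk8_3, mk8_4, mk8_5, mk8_6, mk8_7] <;> omega
        · funext i; fin_cases i <;>
            simp [fH8_0, fH8_1, fH8_2, fH8_3, fH8_4, fH8_5, fH8_6, fH8_7,
              mk8_0, mk8_1, mk8_2, mk8_3, mk8_4, mk8_5, mk8_6, mk8_7, hn] <;>
            push_cast <;> ring
      · choose n hn using hhalf
        refine ⟨mk8 (n 0 + n 1 + 1) (n 0 - n 1) (n 2 + n 3 + 1) (n 2 - n 3)
            (n 4 + n 5 + 1) (n 4 - n 5) (n 6 + n 7 + 1) (n 6 - n 7), ?_, ?_⟩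
        · rw [mem_LH8_iff]
          have hs : n 0 + n 1 + n 2 + n 3 + n 4 + n 5 + n 6 + n 7 + 4 = 2 * m := by
            rw [Fin.sum_univ_eight] at hm
            simp only [hn] at hm
            have : ((n 0 + n 1 + n 2 + n 3 + n 4 + n 5 + n 6 + n 7 + 4 : ℤ) : ℚ)
                = ((2 * m : ℤ) : ℚ) := by push_cast; push_cast at hm; linarith
            exact_mod_cast this
          refine ⟨?_, ?_, ?_, ?_⟩ <;>
            simp only [mk8_0, mk8_1, mk8_2, mk8_3, mk8_4, mk8_5, mk8_6, mk8_7] <;> omega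
        · funext i; fin_cases i <;>
            simp [fH8_0, fH8_1, fH8_2, fH8_3, fH8_4, fH8_5, fH8_6, fH8_7,
              mk8_0, mk8_1, mk8_2, mk8_3, mk8_4, mk8_5, mk8_6, mk8_7, hn] <;>
            push_cast <;> ring
    · -- additivity
      intro x _ y _
      funext i; fin_cases i <;>
        simp [fH8_0, fH8_1, fH8_2, fH8_3, fH8_4, fH8_5, fH8_6, fH8_7] <;> ring
    · -- inner product
      intro x _ y _
      simp only [Fin.sum_univ_eight, fH8_0, fH8_1, fH8_2, fH8_3, fH8_4, fH8_5, fH8_6, fH8_7]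
      push_cast; ring
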